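/- Let ω(x) = e^{2x}/(x+1)² and let θ : (−1, ∞) → ℝ be any differentiable function with θ'(x) = 12 e^{2x}/(x+1)³ on (−1, ∞). Then θ is not a rational function of x and ω: there do not exist real polynomials P, Q in two variables such that Q(x, ω(x)) ≠ 0 for all x ∈ (−1, ∞) and θ(x) = P(x, ω(x))/Q(x, ω(x)) for all x ∈ (−1, ∞). -/

import Mathlib

/-- `ω(x) = e^{2x}/(x+1)²`. -/
noncomputable def ω (x : ℝ) : ℝ := Real.exp (2 * x) / (x + 1)^2

open Real Filter Set

-- analyticity of iterated derivatives on an open set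
lemma analytic_iteratedDeriv {f : ℝ → ℝ} {s : Set ℝ} (hs : IsOpen s)
    (hf : AnalyticOnNhd ℝ f s) (n : ℕ) :
    AnalyticOnNhd ℝ (iteratedDeriv n f) s := by
  induction n with
  | zero => simpa [iteratedDeriv_zero] using hf
  | succ n ih => rw [iteratedDeriv_succ]; exact ih.deriv

-- product with identity
lemma iter_id_mul {f : ℝ → ℝ} {s : Set ℝ} (hs : IsOpen s)
    (hf : AnalyticOnNhd ℝ f s) (n : ℕ) :
    ∀ t ∈ s, iteratedDeriv (n + 1) (fun u => u * f u) t
      = t * iteratedDeriv (n + 1) f t + (n + 1 : ℝ) * iteratedDeriv n f t := by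
  induction n with
  | zero =>
    intro t ht
    rw [iteratedDeriv_one, iteratedDeriv_one, iteratedDeriv_zero]
    have h1 : HasDerivAt f (deriv f t) t := ((hf t ht).differentiableAt).hasDerivAt
    have h2 : HasDerivAt (fun u => u * f u) (1 * f t + t * deriv f t) t :=
      (hasDerivAt_id t).mul h1
    rw [h2.deriv]; ring
  | succ n ih =>
    intro t ht
    rw [iteratedDeriv_succ]
    have hev : iteratedDeriv (n + 1) (fun u => u * f u)
        =ᶠ[nhds t] fun u => u * iteratedDeriv (n + 1) f u + (n + 1 : ℝ) * iteratedDeriv n f u := by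
      filter_upwards [hs.mem_nhds ht] with u hu using ih u hu
    rw [hev.deriv_eq]
    have hd1 : HasDerivAt (iteratedDeriv (n + 1) f) (iteratedDeriv (n + 2) f t) t := by
      have := ((analytic_iteratedDeriv hs hf (n + 1)) t ht).differentiableAt.hasDerivAt
      rwa [← iteratedDeriv_succ] at this
    have hd0 : HasDerivAt (iteratedDeriv n f) (iteratedDeriv (n + 1) f t) t := by
      have := ((analytic_iteratedDeriv hs hf n) t ht).differentiableAt.hasDerivAt
      rwa [← iteratedDeriv_succ] at this
    have h2 : HasDerivAt (fun u => u * iteratedDeriv (n + 1) f u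
        + (n + 1 : ℝ) * iteratedDeriv n f u)
        ((1 * iteratedDeriv (n + 1) f t + t * iteratedDeriv (n + 2) f t)
          + (n + 1 : ℝ) * iteratedDeriv (n + 1) f t) t :=
      ((hasDerivAt_id t).mul hd1).add (hd0.const_mul _)
    rw [h2.deriv]
    push_cast
    ring

-- LHS structure lemma
lemma iter_LHS {A : ℝ → ℝ} {s : Set ℝ} (hs : IsOpen s)
    (hA : AnalyticOnNhd ℝ A s) (c : ℝ) (n : ℕ) :
    ∀ t ∈ s, iteratedDeriv n (fun u => u * deriv A u - c * A u) t
      = t * iteratedDeriv (n + 1) A t + ((n : ℝ) - c) * iteratedDeriv n A t := by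
  induction n with
  | zero =>
    intro t ht
    simp only [iteratedDeriv_zero, zero_add, iteratedDeriv_one, Nat.cast_zero]
    ring
  | succ n ih =>
    intro t ht
    rw [iteratedDeriv_succ]
    have hev : iteratedDeriv n (fun u => u * deriv A u - c * A u)
        =ᶠ[nhds t] fun u => u * iteratedDeriv (n + 1) A u + ((n : ℝ) - c) * iteratedDeriv n A u := by
      filter_upwards [hs.mem_nhds ht] with u hu using ih u hu
    rw [hev.deriv_eq]
    have hd1 : HasDerivAt (iteratedDeriv (n + 1) A) (iteratedDeriv (n + 2) A t) t := by
      have := ((analytic_iteratedDeriv hs hA (n + 1)) t ht).differentiableAt.hasDerivAt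
      rwa [← iteratedDeriv_succ] at this
    have hd0 : HasDerivAt (iteratedDeriv n A) (iteratedDeriv (n + 1) A t) t := by
      have := ((analytic_iteratedDeriv hs hA n) t ht).differentiableAt.hasDerivAt
      rwa [← iteratedDeriv_succ] at this
    have h2 : HasDerivAt (fun u => u * iteratedDeriv (n + 1) A u
        + ((n : ℝ) - c) * iteratedDeriv n A u)
        ((1 * iteratedDeriv (n + 1) A t + t * iteratedDeriv (n + 2) A t)
          + ((n : ℝ) - c) * iteratedDeriv (n + 1) A t) t :=
      ((hasDerivAt_id t).mul hd1).add (hd0.const_mul _)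
    rw [h2.deriv]
    push_cast
    ring

lemma entire_pow_exp (c : ℝ) (m : ℕ) :
    AnalyticOnNhd ℝ (fun t : ℝ => t ^ m * (c * Real.exp (2 * t))) Set.univ := by
  apply (analyticOnNhd_id.pow m).mul
  apply analyticOnNhd_const.mul
  exact analyticOnNhd_rexp.comp (analyticOnNhd_const.mul analyticOnNhd_id)
    (Set.mapsTo_univ _ _)

lemma my_deriv_cexp (c : ℝ) :
    deriv (fun t : ℝ => c * Real.exp (2 * t)) = fun t => 2 * c * Real.exp (2 * t) := by
  funext t
  have h : HasDerivAt (fun t : ℝ => c * Real.exp (2 * t))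
      (Real.exp (2 * t) * 2 * c) t := by
    have h1 : HasDerivAt (fun t : ℝ => 2 * t) 2 t := by
      simpa using (hasDerivAt_id t).const_mul (2 : ℝ)
    exact ((Real.hasDerivAt_exp (2 * t)).comp t h1).const_mul c |>.congr_deriv (by ring)
  rw [h.deriv]; ring

lemma iter_pow_exp (c : ℝ) : ∀ m : ℕ,
    iteratedDeriv (m + 2) (fun t : ℝ => t ^ m * (c * Real.exp (2 * t))) 0
      = 2 * c * (Nat.factorial (m + 2) : ℝ) := by
  intro m
  induction m with
  | zero =>
    have he : (fun t : ℝ => t ^ 0 * (c * Real.exp (2 * t)))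
        = fun t : ℝ => c * Real.exp (2 * t) := by funext t; simp
    rw [he, show (0 + 2 : ℕ) = 2 from rfl, iteratedDeriv_succ, iteratedDeriv_one,
      my_deriv_cexp, my_deriv_cexp]
    norm_num [Nat.factorial]
    ring
  | succ m ih =>
    have he : (fun t : ℝ => t ^ (m + 1) * (c * Real.exp (2 * t)))
        = fun u : ℝ => u * (u ^ m * (c * Real.exp (2 * u))) := by funext t; ring
    rw [he]
    have hfac : (Nat.factorial (m + 1 + 2) : ℝ) = (m + 3) * Nat.factorial (m + 2) := by
      rw [show m + 1 + 2 = (m + 2) + 1 from rfl, Nat.factorial_succ]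
      push_cast; ring
    rw [show m + 1 + 2 = (m + 2) + 1 from rfl,
      iter_id_mul isOpen_univ (entire_pow_exp c m) (m + 2) 0 (Set.mem_univ 0), ih, hfac]
    push_cast
    ring

lemma no_analytic_sol {A : ℝ → ℝ} {m : ℕ} {ε : ℝ} (hε : 0 < ε)
    (hA : AnalyticOnNhd ℝ A (Metric.ball 0 ε))
    (h : ∀ t ∈ Set.Ioo (0 : ℝ) ε,
      t * deriv A t - ((m : ℝ) + 2) * A t = 12 * Real.exp (2 * (t - 1)) * t ^ m) :
    False := by
  set s : Set ℝ := Metric.ball (0 : ℝ) ε with hs_def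
  have hs : IsOpen s := Metric.isOpen_ball
  have h0s : (0 : ℝ) ∈ s := Metric.mem_ball_self hε
  set L : ℝ → ℝ := fun t => t * deriv A t - ((m : ℝ) + 2) * A t with hL_def
  set R : ℝ → ℝ := fun t => t ^ m * ((12 * Real.exp (-2)) * Real.exp (2 * t)) with hR_def
  have hRL : ∀ t : ℝ, 12 * Real.exp (2 * (t - 1)) * t ^ m = R t := by
    intro t
    rw [hR_def]
    have : Real.exp (2 * (t - 1)) = Real.exp (2 * t) * Real.exp (-2) := by
      rw [← Real.exp_add]; ring_nf
    rw [this]; ring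
  have hLan : AnalyticOnNhd ℝ L s :=
    (analyticOnNhd_id.mul hA.deriv).sub (analyticOnNhd_const.mul hA)
  have hRan : AnalyticOnNhd ℝ R s :=
    (entire_pow_exp (12 * Real.exp (-2)) m).mono (Set.subset_univ s)
  have hfreq : ∃ᶠ t in nhdsWithin (0 : ℝ) {(0 : ℝ)}ᶜ, L t = R t := by
    have hev : ∀ᶠ t in nhdsWithin (0 : ℝ) (Set.Ioi 0), L t = R t := by
      filter_upwards [Ioo_mem_nhdsGT_of_mem (by exact ⟨le_refl _, hε⟩ :
        (0 : ℝ) ∈ Set.Ico 0 ε)] with t ht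
      rw [← hRL t]
      exact h t ht
    have : ∃ᶠ t in nhdsWithin (0 : ℝ) (Set.Ioi 0), L t = R t := hev.frequently
    exact this.filter_mono (nhdsWithin_mono _ (fun x hx => ne_of_gt hx))
  have heq : Set.EqOn L R s :=
    hLan.eqOn_of_preconnected_of_frequently_eq hRan (convex_ball (0 : ℝ) ε).isPreconnected
      h0s hfreq
  have hev0 : L =ᶠ[nhds (0 : ℝ)] R := by
    filter_upwards [hs.mem_nhds h0s] with t ht using heq ht
  have hiter := hev0.iteratedDeriv_eq (m + 2)
  have hLval : iteratedDeriv (m + 2) L 0 = 0 := by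
    rw [hL_def]
    rw [iter_LHS hs hA ((m : ℝ) + 2) (m + 2) 0 h0s]
    push_cast
    ring
  have hRval : iteratedDeriv (m + 2) R 0
      = 2 * (12 * Real.exp (-2)) * (Nat.factorial (m + 2) : ℝ) :=
    iter_pow_exp (12 * Real.exp (-2)) m
  rw [hLval, hRval] at hiter
  have h1 : (0 : ℝ) < 2 * (12 * Real.exp (-2)) * (Nat.factorial (m + 2) : ℝ) := by
    positivity
  exact absurd hiter.symm (ne_of_gt h1)

lemma poly_part (p : MvPolynomial (Fin 2) ℝ) :
    ∃ F : ℝ → ℝ, AnalyticOnNhd ℝ F Set.univ ∧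
      ∀ t : ℝ, 0 < t →
        F t = t ^ (2 * p.totalDegree) * MvPolynomial.eval ![t - 1, ω (t - 1)] p := by
  classical
  refine ⟨fun t => ∑ d ∈ p.support, p.coeff d *
      ((t - 1) ^ (d 0) * (Real.exp (2 * (t - 1))) ^ (d 1)
        * t ^ (2 * (p.totalDegree - d 1))), ?_, ?_⟩
  · apply Finset.analyticOnNhd_fun_sum
    intro d _
    apply analyticOnNhd_const.mul
    have h1 : AnalyticOnNhd ℝ (fun t : ℝ => (t - 1) ^ (d 0)) Set.univ :=
      (analyticOnNhd_id.sub analyticOnNhd_const).pow _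
    have h2 : AnalyticOnNhd ℝ (fun t : ℝ => (Real.exp (2 * (t - 1))) ^ (d 1)) Set.univ := by
      apply AnalyticOnNhd.pow
      exact analyticOnNhd_rexp.comp
        (analyticOnNhd_const.mul (analyticOnNhd_id.sub analyticOnNhd_const))
        (Set.mapsTo_univ _ _)
    exact (h1.mul h2).mul (analyticOnNhd_id.pow _)
  · intro t ht
    have ht0 : t ≠ 0 := ne_of_gt ht
    rw [MvPolynomial.eval_eq', Finset.mul_sum]
    apply Finset.sum_congr rfl
    intro d hd
    have hd1 : d 1 ≤ p.totalDegree := by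
      have hsum : (d.sum fun _ e => e) = d 0 + d 1 := by
        rw [Finsupp.sum_fintype]
        · exact Fin.sum_univ_two d
        · intro i; rfl
      have := MvPolynomial.le_totalDegree hd
      omega
    have hprod : (∏ i : Fin 2, (![t - 1, ω (t - 1)] i) ^ d i)
        = (t - 1) ^ (d 0) * (ω (t - 1)) ^ (d 1) := by
      rw [Fin.prod_univ_two]
      simp
    rw [hprod]
    have hω : ω (t - 1) = Real.exp (2 * (t - 1)) / t ^ 2 := by
      unfold ω
      norm_num
    rw [hω, div_pow]
    have hsplit : (2 : ℕ) * p.totalDegree = 2 * (p.totalDegree - d 1) + 2 * (d 1) := by omega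
    rw [hsplit, pow_add]
    have hpne : (t ^ 2) ^ (d 1) ≠ 0 := by positivity
    field_simp
    ring

/-- If `θ : (−1, ∞) → ℝ` is differentiable with `θ'(x) = 12 e^{2x}/(x+1)³` on
`(−1, ∞)`, then `θ` is not a rational function of `x` and `ω`: there are no real
polynomials `P, Q` in two variables with `Q(x, ω(x)) ≠ 0` on `(−1, ∞)` and
`θ(x) = P(x, ω(x))/Q(x, ω(x))` on `(−1, ∞)`. -/
theorem theta_not_rational (θ : ℝ → ℝ)
    (hθ : ∀ x ∈ Set.Ioi (-1 : ℝ),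
      HasDerivAt θ (12 * Real.exp (2 * x) / (x + 1)^3) x) :
    ¬ ∃ P Q : MvPolynomial (Fin 2) ℝ,
      (∀ x ∈ Set.Ioi (-1 : ℝ), MvPolynomial.eval ![x, ω x] Q ≠ 0) ∧
      (∀ x ∈ Set.Ioi (-1 : ℝ),
        θ x = MvPolynomial.eval ![x, ω x] P / MvPolynomial.eval ![x, ω x] Q) := by
  rintro ⟨P, Q, hQ, hPQ⟩
  obtain ⟨F, hFan, hFeq⟩ := poly_part P
  obtain ⟨G, hGan, hGeq⟩ := poly_part Q
  set fh : ℝ → ℝ := fun t => t ^ (2 * Q.totalDegree) * F t with hfh_def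
  set gh : ℝ → ℝ := fun t => t ^ (2 * P.totalDegree) * G t with hgh_def
  have hmem : ∀ t : ℝ, 0 < t → (t - 1) ∈ Set.Ioi (-1 : ℝ) := fun t ht => by
    simp only [Set.mem_Ioi]; linarith
  have hgh_ne : ∀ t : ℝ, 0 < t → gh t ≠ 0 := by
    intro t ht
    have := hQ (t - 1) (hmem t ht)
    rw [hgh_def]
    simp only
    rw [hGeq t ht]
    have ht0 : t ≠ 0 := ne_of_gt ht
    positivity
  have hratio : ∀ t : ℝ, 0 < t → θ (t - 1) = fh t / gh t := by
    intro t ht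
    have ht0 : t ≠ 0 := ne_of_gt ht
    have hQne := hQ (t - 1) (hmem t ht)
    rw [hPQ (t - 1) (hmem t ht), hfh_def, hgh_def]
    simp only
    rw [hFeq t ht, hGeq t ht]
    have h1 : (t : ℝ) ^ (2 * Q.totalDegree) ≠ 0 := pow_ne_zero _ ht0
    have h2 : (t : ℝ) ^ (2 * P.totalDegree) ≠ 0 := pow_ne_zero _ ht0
    field_simp
  have hfh_an : AnalyticOnNhd ℝ fh Set.univ := (analyticOnNhd_id.pow _).mul hFan
  have hgh_an : AnalyticOnNhd ℝ gh Set.univ := (analyticOnNhd_id.pow _).mul hGan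
  have hG0 : AnalyticAt ℝ gh 0 := hgh_an 0 (Set.mem_univ 0)
  -- the order of gh at 0 is finite
  have h_not_top : analyticOrderAt gh 0 ≠ ⊤ := by
    intro htop
    have hev := analyticOrderAt_eq_top.mp htop
    rw [Metric.eventually_nhds_iff] at hev
    obtain ⟨δ, hδ, hball⟩ := hev
    have h1 : gh (δ / 2) = 0 := by
      apply hball
      rw [Real.dist_eq, sub_zero, abs_of_pos (by linarith)]
      linarith
    exact hgh_ne (δ / 2) (by linarith) h1
  obtain ⟨m, hm⟩ : ∃ m : ℕ, analyticOrderAt gh 0 = (m : ℕ∞) := by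
    cases h : analyticOrderAt gh 0 with
    | top => exact absurd h h_not_top
    | coe m => exact ⟨m, rfl⟩
  obtain ⟨v, hv_an, hv0, hv_eq⟩ := hG0.analyticOrderAt_eq_natCast.mp hm
  set A : ℝ → ℝ := fun t => t ^ 2 * fh t / v t with hA_def
  have hA0 : AnalyticAt ℝ A 0 := by
    apply AnalyticAt.div
    · exact ((analyticAt_id.pow 2).mul (hfh_an 0 (Set.mem_univ 0)))
    · exact hv_an
    · exact hv0
  clear_value A
  -- pick ε
  have hev_all : ∀ᶠ t in nhds (0 : ℝ),
      gh t = t ^ m * v t ∧ v t ≠ 0 ∧ AnalyticAt ℝ A t := by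
    have e1 : ∀ᶠ t in nhds (0 : ℝ), gh t = t ^ m * v t := by
      filter_upwards [hv_eq] with t ht
      simpa [smul_eq_mul] using ht
    have e2 : ∀ᶠ t in nhds (0 : ℝ), v t ≠ 0 := hv_an.continuousAt.eventually_ne hv0
    have e3 : ∀ᶠ t in nhds (0 : ℝ), AnalyticAt ℝ A t := hA0.eventually_analyticAt
    filter_upwards [e1, e2, e3] with t h1 h2 h3 using ⟨h1, h2, h3⟩
  rw [Metric.eventually_nhds_iff] at hev_all
  obtain ⟨ε, hε, hball⟩ := hev_all
  have hdist : ∀ t : ℝ, t ∈ Metric.ball (0 : ℝ) ε → dist t 0 < ε := fun t ht => ht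
  have hA_ball : AnalyticOnNhd ℝ A (Metric.ball 0 ε) := by
    intro t ht
    exact (hball (hdist t ht)).2.2
  -- key differential identity
  have key : ∀ t ∈ Set.Ioo (0 : ℝ) ε,
      t * deriv A t - ((m : ℝ) + 2) * A t = 12 * Real.exp (2 * (t - 1)) * t ^ m := by
    intro t ⟨ht0, htε⟩
    have htne : t ≠ 0 := ne_of_gt ht0
    have htb : t ∈ Metric.ball (0 : ℝ) ε := by
      rw [Metric.mem_ball, Real.dist_eq, sub_zero, abs_of_pos ht0]; exact htε
    -- local identity θ(u-1) = A u / u^(m+2)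
    have hlocal : (fun u => θ (u - 1)) =ᶠ[nhds t] fun u => A u / u ^ (m + 2) := by
      have hopen : IsOpen (Metric.ball (0 : ℝ) ε ∩ Set.Ioi 0) :=
        Metric.isOpen_ball.inter isOpen_Ioi
      filter_upwards [hopen.mem_nhds ⟨htb, ht0⟩] with u ⟨hub, hu0⟩
      obtain ⟨hg_eq, hv_ne, -⟩ := hball (hdist u hub)
      have hu0' : (0 : ℝ) < u := hu0
      have hune : u ≠ 0 := ne_of_gt hu0'
      rw [hratio u hu0', hg_eq, hA_def]
      simp only
      have h1 : u ^ (m + 2) ≠ 0 := pow_ne_zero _ hune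
      field_simp
      ring
    -- derivative of LHS
    have H1 : HasDerivAt (fun u => θ (u - 1))
        (12 * Real.exp (2 * (t - 1)) / t ^ 3) t := by
      have hsub : HasDerivAt (fun u : ℝ => u - 1) 1 t := (hasDerivAt_id t).sub_const 1
      have := (hθ (t - 1) (hmem t ht0)).comp t hsub
      simpa [Function.comp_def] using this
    -- derivative of RHS
    have hAt : AnalyticAt ℝ A t := hA_ball t htb
    have hA_diff : HasDerivAt A (deriv A t) t := hAt.differentiableAt.hasDerivAt
    have hpow : HasDerivAt (fun u : ℝ => u ^ (m + 2)) (((m : ℝ) + 2) * t ^ (m + 1)) t := by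
      have := hasDerivAt_pow (m + 2) t
      simpa [Nat.cast_add] using this
    have hpne : t ^ (m + 2) ≠ 0 := pow_ne_zero _ htne
    have H2 : HasDerivAt (fun u => A u / u ^ (m + 2))
        ((deriv A t * t ^ (m + 2) - A t * (((m : ℝ) + 2) * t ^ (m + 1))) / (t ^ (m + 2)) ^ 2)
        t := hA_diff.div hpow hpne
    have H1' : HasDerivAt (fun u => A u / u ^ (m + 2))
        (12 * Real.exp (2 * (t - 1)) / t ^ 3) t := by
      exact (Filter.EventuallyEq.hasDerivAt_iff hlocal).mp H1
    have huniq := H1'.unique H2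
    -- clear denominators
    rw [div_eq_div_iff (by positivity) (by positivity)] at huniq
    apply mul_right_cancel₀ (pow_ne_zero (m + 4) htne)
    linear_combination -huniq
  exact no_analytic_sol hε hA_ball key
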